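/- arXiv:2502.06974 — 2 statements merged into one kernel-verified Lean document; each statement's English description precedes it below -/
import Mathlib

section
/- If G is a finite subgroup of GL_n(ℚ), then there exists a lattice H in ℚⁿ (a subgroup isomorphic to ℤⁿ spanning ℚⁿ over ℚ) that is invariant under G, namely H = ⋂_{A ∈ G} A(ℤⁿ). -/
open Matrix

/-- A lattice in `ℚⁿ`: a subgroup isomorphic to `ℤⁿ` that spans `ℚⁿ` over `ℚ`. -/
def IsLattice (n : ℕ) (L : AddSubgroup (Fin n → ℚ)) : Prop :=
  Nonempty (L ≃+ (Fin n → ℤ)) ∧ Submodule.span ℚ (L : Set (Fin n → ℚ)) = ⊤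

/-- The standard lattice `ℤⁿ ⊂ ℚⁿ`. -/
def stdLattice (n : ℕ) : AddSubgroup (Fin n → ℚ) where
  carrier := {v | ∀ i, ∃ k : ℤ, v i = k}
  zero_mem' := fun i => ⟨0, by simp⟩
  add_mem' := by
    rintro a b ha hb i
    obtain ⟨k, hk⟩ := ha i
    obtain ⟨l, hl⟩ := hb i
    exact ⟨k + l, by simp [hk, hl]⟩
  neg_mem' := by
    rintro a ha i
    obtain ⟨k, hk⟩ := ha i
    exact ⟨-k, by simp [hk]⟩

namespace Stmt3Aux

variable {n : ℕ}

lemma mem_map_gl (A : GL (Fin n) ℚ) (K : AddSubgroup (Fin n → ℚ)) (x : Fin n → ℚ) :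
    x ∈ AddSubgroup.map ((A : Matrix (Fin n) (Fin n) ℚ).mulVecLin.toAddMonoidHom) K ↔
      ((A⁻¹ : GL (Fin n) ℚ) : Matrix (Fin n) (Fin n) ℚ).mulVec x ∈ K := by
  constructor
  · rintro ⟨y, hy, rfl⟩
    simp only [LinearMap.toAddMonoidHom_coe, Matrix.mulVecLin_apply, Matrix.mulVec_mulVec,
      Units.inv_mul, Matrix.one_mulVec]
    exact hy
  · intro h
    refine ⟨_, h, ?_⟩
    simp only [LinearMap.toAddMonoidHom_coe, Matrix.mulVecLin_apply, Matrix.mulVec_mulVec,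
      Units.mul_inv, Matrix.one_mulVec]

lemma int_of_den_dvd (q : ℚ) (m : ℕ) (h : (q.den : ℤ) ∣ (m : ℤ)) : ∃ z : ℤ, q * m = z := by
  obtain ⟨c, hc⟩ := h
  refine ⟨q.num * c, ?_⟩
  have h1 : (q.num : ℚ) = q * q.den := by
    field_simp [Rat.num_div_den q]
    exact (Rat.mul_den_eq_num q).symm
  have hc' : (m : ℚ) = (q.den : ℚ) * (c : ℚ) := by exact_mod_cast hc
  rw [hc', ← mul_assoc, ← h1]
  push_cast
  ring

end Stmt3Aux

namespace Stmt3Aux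

def intInc (n : ℕ) : (Fin n → ℤ) →ₗ[ℤ] (Fin n → ℚ) where
  toFun v := fun i => (v i : ℚ)
  map_add' a b := by funext i; push_cast; simp
  map_smul' z v := by funext i; simp [zsmul_eq_mul]

lemma intInc_inj : Function.Injective (intInc n) := by
  intro a b h
  funext i
  have := congrFun h i
  simpa [intInc] using this

lemma intInc_range :
    LinearMap.range (intInc n) = AddSubgroup.toIntSubmodule (stdLattice n) := by
  ext x
  constructor
  · rintro ⟨v, rfl⟩ i
    exact ⟨v i, rfl⟩
  · intro hx
    choose k hk using hx
    exact ⟨k, funext fun i => (hk i).symm⟩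

noncomputable def stdBasis (n : ℕ) :
    Module.Basis (Fin n) ℤ (AddSubgroup.toIntSubmodule (stdLattice n)) :=
  (Pi.basisFun ℤ (Fin n)).map
    ((LinearEquiv.ofInjective (intInc n) intInc_inj).trans (LinearEquiv.ofEq _ _ intInc_range))

end Stmt3Aux

open Stmt3Aux in
/-- If `G ≤ GL n ℚ` is finite, then `H = ⋂_{A ∈ G} A(ℤⁿ)` is a `G`-invariant
lattice in `ℚⁿ`. -/
theorem stmt_3 (n : ℕ) (G : Subgroup (GL (Fin n) ℚ)) (hG : Finite G)
    (H : AddSubgroup (Fin n → ℚ))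
    (hH : H = ⨅ A : G, AddSubgroup.map
      (((A : GL (Fin n) ℚ) : Matrix (Fin n) (Fin n) ℚ).mulVecLin.toAddMonoidHom)
      (stdLattice n)) :
    IsLattice n H ∧ ∀ A ∈ G, AddSubgroup.map
      (((A : GL (Fin n) ℚ) : Matrix (Fin n) (Fin n) ℚ).mulVecLin.toAddMonoidHom) H = H := by
  letI : Fintype G := Fintype.ofFinite G
  have hmem : ∀ x : Fin n → ℚ, x ∈ H ↔ ∀ A : G,
      (((A : GL (Fin n) ℚ)⁻¹ : GL (Fin n) ℚ) : Matrix (Fin n) (Fin n) ℚ).mulVec x ∈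
        stdLattice n := by
    intro x
    rw [hH, AddSubgroup.mem_iInf]
    exact forall_congr' fun A => mem_map_gl _ _ _
  -- the common denominator
  set d : ℕ := ∏ A : G, ∏ i : Fin n, ∏ j : Fin n,
    ((((A : GL (Fin n) ℚ)⁻¹ : GL (Fin n) ℚ) : Matrix (Fin n) (Fin n) ℚ) i j).den with hd_def
  have hd0 : (d : ℚ) ≠ 0 := by
    have : 0 < d := by
      refine Finset.prod_pos fun A _ => Finset.prod_pos fun i _ => Finset.prod_pos fun j _ => ?_
      exact Rat.den_pos _
    exact_mod_cast this.ne'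
  have hd : ∀ v ∈ stdLattice n, (d : ℚ) • v ∈ H := by
    intro v hv
    rw [hmem]
    intro A
    set B : Matrix (Fin n) (Fin n) ℚ :=
      (((A : GL (Fin n) ℚ)⁻¹ : GL (Fin n) ℚ) : Matrix (Fin n) (Fin n) ℚ) with hB
    intro i
    have hterm : ∀ j : Fin n, ∃ z : ℤ, B i j * ((d : ℚ) * v j) = z := by
      intro j
      obtain ⟨z, hz⟩ := hv j
      have hdvd : ((B i j).den : ℤ) ∣ (d : ℤ) := by
        have h1 : (B i j).den ∣ ∏ j' : Fin n, (B i j').den :=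
          Finset.dvd_prod_of_mem _ (Finset.mem_univ j)
        have h2 : (∏ j' : Fin n, (B i j').den) ∣
            ∏ i' : Fin n, ∏ j' : Fin n, (B i' j').den :=
          Finset.dvd_prod_of_mem _ (Finset.mem_univ i)
        have h3 : (∏ i' : Fin n, ∏ j' : Fin n, (B i' j').den) ∣ d := by
          rw [hd_def]
          exact Finset.dvd_prod_of_mem _ (Finset.mem_univ A)
        exact_mod_cast (h1.trans h2).trans h3
      obtain ⟨w, hw⟩ := int_of_den_dvd (B i j) d hdvd
      exact ⟨w * z, by rw [hz, ← mul_assoc, hw]; push_cast; ring⟩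
    choose z hz using hterm
    refine ⟨∑ j, z j, ?_⟩
    have : B.mulVec ((d : ℚ) • v) i = ∑ j, B i j * ((d : ℚ) * v j) := by
      simp [Matrix.mulVec, dotProduct, mul_comm]
    rw [this, Finset.sum_congr rfl fun j _ => hz j]
    push_cast
    ring
  have hspanH : Submodule.span ℚ (H : Set (Fin n → ℚ)) = ⊤ := by
    rw [eq_top_iff, ← (Pi.basisFun ℚ (Fin n)).span_eq, Submodule.span_le]
    rintro _ ⟨i, rfl⟩
    have hstd : Pi.basisFun ℚ (Fin n) i ∈ stdLattice n := by
      intro j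
      refine ⟨if j = i then 1 else 0, ?_⟩
      by_cases h : j = i <;> simp [Pi.basisFun_apply, Pi.single_apply, h]
    have h1 : (d : ℚ) • Pi.basisFun ℚ (Fin n) i ∈ H := hd _ hstd
    have h2 : Pi.basisFun ℚ (Fin n) i
        = (d : ℚ)⁻¹ • ((d : ℚ) • Pi.basisFun ℚ (Fin n) i) := by
      rw [smul_smul, inv_mul_cancel₀ hd0, one_smul]
    rw [h2]
    exact Submodule.smul_mem _ _ (Submodule.subset_span h1)
  -- freeness
  set N : Submodule ℤ (Fin n → ℚ) := AddSubgroup.toIntSubmodule H with hN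
  have hle : N ≤ AddSubgroup.toIntSubmodule (stdLattice n) := by
    intro x hx
    have h1 := (hmem x).mp hx ⟨1, G.one_mem⟩
    exact (by simpa using h1 : x ∈ stdLattice n)
  obtain ⟨m, bN⟩ := Submodule.basisOfPidOfLE hle (stdBasis n)
  set v : Fin m → (Fin n → ℚ) := fun i => (bN i : Fin n → ℚ) with hv_def
  have hZ : LinearIndependent ℤ v := bN.linearIndependent.map' N.subtype N.ker_subtype
  have hQ : LinearIndependent ℚ v := (LinearIndependent.iff_fractionRing ℤ ℚ).mp hZ
  have hsub : (H : Set (Fin n → ℚ)) ⊆ (Submodule.span ℚ (Set.range v) : Set (Fin n → ℚ)) := by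
    intro x hx
    have h1 : (⟨x, hx⟩ : N) ∈ Submodule.span ℤ (Set.range bN) := by
      rw [bN.span_eq]; trivial
    have h2 : x ∈ Submodule.map N.subtype (Submodule.span ℤ (Set.range bN)) :=
      ⟨_, h1, rfl⟩
    rw [Submodule.map_span] at h2
    have h3 : N.subtype '' Set.range bN = Set.range v := by
      ext y; simp [hv_def]
    rw [h3] at h2
    exact Submodule.span_subset_span ℤ ℚ _ h2
  have hvtop : Submodule.span ℚ (Set.range v) = ⊤ := by
    rw [eq_top_iff, ← hspanH]
    exact Submodule.span_le.mpr hsub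
  have hmn : m = n := by
    have h1 := Module.finrank_eq_card_basis (Module.Basis.mk hQ (by rw [hvtop]))
    simpa [Module.finrank_fintype_fun_eq_card] using h1.symm
  have e1 : H ≃+ N :=
    ⟨⟨fun x => ⟨x.1, x.2⟩, fun x => ⟨x.1, x.2⟩, fun _ => rfl, fun _ => rfl⟩, fun _ _ => rfl⟩
  have bN' : Module.Basis (Fin n) ℤ N := bN.reindex (finCongr hmn)
  refine ⟨⟨⟨e1.trans bN'.equivFun.toAddEquiv⟩, hspanH⟩, ?_⟩
  -- invariance
  intro A hA
  ext x
  rw [mem_map_gl, hmem, hmem]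
  constructor
  · intro h B
    have h1 := h ((⟨A, hA⟩ : G)⁻¹ * B)
    have e : ((((⟨A, hA⟩ : G)⁻¹ * B : G) : GL (Fin n) ℚ))⁻¹ * A⁻¹ = ((B : GL (Fin n) ℚ))⁻¹ := by
      simp only [Subgroup.coe_mul, InvMemClass.coe_inv]
      group
    rw [Matrix.mulVec_mulVec, ← Units.val_mul, e] at h1
    exact h1
  · intro h B
    have h1 := h ((⟨A, hA⟩ : G) * B)
    have e : (((⟨A, hA⟩ * B : G) : GL (Fin n) ℚ))⁻¹ = ((B : GL (Fin n) ℚ))⁻¹ * A⁻¹ := by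
      simp only [Subgroup.coe_mul]
      group
    rw [Matrix.mulVec_mulVec, ← Units.val_mul, ← e]
    exact h1
end

section
/- Every finite subgroup of GL_n(ℚ) is conjugate in GL_n(ℚ) to a subgroup of GL_n(ℤ). -/
open Matrix

/-- A matrix over `ℚ` lies in `GL_n(ℤ)` if both it and its inverse have integer
entries. -/
def InGLnZ {n : ℕ} (A : GL (Fin n) ℚ) : Prop :=
  (∀ i j, ∃ k : ℤ, ((A : Matrix (Fin n) (Fin n) ℚ) i j) = k) ∧
  (∀ i j, ∃ k : ℤ, (((A⁻¹ : GL (Fin n) ℚ) : Matrix (Fin n) (Fin n) ℚ) i j) = k)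

/-- Every finite subgroup of `GL n ℚ` is conjugate in `GL n ℚ` to a subgroup of
`GL n ℤ`. -/
theorem stmt_4 (n : ℕ) (G : Subgroup (GL (Fin n) ℚ)) (hG : Finite G) :
    ∃ P : GL (Fin n) ℚ, ∀ A ∈ G, InGLnZ (P * A * P⁻¹) := by
  classical
  -- the set of columns of elements of G
  set S : Set (Fin n → ℚ) :=
    ⋃ g ∈ (G : Set (GL (Fin n) ℚ)),
      Set.range (fun j => (g : Matrix (Fin n) (Fin n) ℚ) *ᵥ Pi.single j 1) with hS
  have hSfin : S.Finite :=
    Set.Finite.biUnion (Set.toFinite _) (fun g _ => Set.finite_range _)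
  set L : Submodule ℤ (Fin n → ℚ) := Submodule.span ℤ S with hL
  have hmem : ∀ g ∈ G, ∀ j,
      ((g : GL (Fin n) ℚ) : Matrix (Fin n) (Fin n) ℚ) *ᵥ Pi.single j 1 ∈ L := by
    intro g hg j
    exact Submodule.subset_span (Set.mem_biUnion hg ⟨j, rfl⟩)
  have hsingle : ∀ j, (Pi.single j 1 : Fin n → ℚ) ∈ L := by
    intro j
    have h := hmem 1 (one_mem G) j
    rw [show ((1 : GL (Fin n) ℚ) : Matrix (Fin n) (Fin n) ℚ) = (1 : Matrix (Fin n) (Fin n) ℚ) from rfl,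
      Matrix.one_mulVec] at h
    exact h
  have hinv : ∀ g ∈ G, ∀ x ∈ L, ((g : GL (Fin n) ℚ) : Matrix (Fin n) (Fin n) ℚ) *ᵥ x ∈ L := by
    intro g hg x hx
    have hmap : L.map ((Matrix.mulVecLin ((g : GL (Fin n) ℚ) : Matrix (Fin n) (Fin n) ℚ)).restrictScalars ℤ) ≤ L := by
      rw [hL, Submodule.map_span]
      refine Submodule.span_le.mpr ?_
      rintro _ ⟨y, hy, rfl⟩
      simp only [hS, Set.mem_iUnion] at hy
      obtain ⟨h, hh, j, rfl⟩ := hy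
      refine Submodule.subset_span ?_
      have heq : (Matrix.mulVecLin ((g : GL (Fin n) ℚ) : Matrix (Fin n) (Fin n) ℚ)).restrictScalars ℤ
            (((h : GL (Fin n) ℚ) : Matrix (Fin n) (Fin n) ℚ) *ᵥ Pi.single j 1)
          = ((g * h : GL (Fin n) ℚ) : Matrix (Fin n) (Fin n) ℚ) *ᵥ Pi.single j 1 := by
        simp only [LinearMap.coe_restrictScalars, Matrix.mulVecLin_apply,
          Matrix.mulVec_mulVec, Units.val_mul]
      rw [heq]
      exact Set.mem_biUnion (mul_mem hg hh) ⟨j, rfl⟩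
    exact hmap (Submodule.mem_map_of_mem hx)
  haveI : Module.Finite ℤ L := Module.Finite.span_of_finite ℤ hSfin
  haveI : Module.Free ℤ L := Module.free_of_finite_type_torsion_free'
  set ι := Module.Free.ChooseBasisIndex ℤ L with hι
  set b0 : Module.Basis ι ℤ L := Module.Free.chooseBasis ℤ L with hb0
  set v : ι → (Fin n → ℚ) := fun i => (b0 i : Fin n → ℚ) with hv
  have liZ : LinearIndependent ℤ v :=
    b0.linearIndependent.map' L.subtype (Submodule.ker_subtype L)
  have liQ : LinearIndependent ℚ v := (LinearIndependent.iff_fractionRing ℤ ℚ).mp liZ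
  have hrange : ∀ i, v i ∈ L := fun i => (b0 i).2
  have hLle : (L : Set (Fin n → ℚ)) ⊆ (Submodule.span ℚ (Set.range v) : Set (Fin n → ℚ)) := by
    have hLspan : L = Submodule.span ℤ (Set.range v) := by
      conv_lhs => rw [← Submodule.map_subtype_top L, ← b0.span_eq]
      rw [Submodule.map_span]
      congr 1
      rw [← Set.range_comp]
      rfl
    intro x hx
    rw [hLspan] at hx
    have : Submodule.span ℤ (Set.range v) ≤
        (Submodule.span ℚ (Set.range v)).restrictScalars ℤ :=
      Submodule.span_le.mpr (fun y hy => Submodule.subset_span hy)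
    exact this hx
  have hspan : ⊤ ≤ Submodule.span ℚ (Set.range v) := by
    rw [← (Pi.basisFun ℚ (Fin n)).span_eq]
    refine Submodule.span_le.mpr ?_
    rintro _ ⟨j, rfl⟩
    refine hLle ?_
    simpa using hsingle j
  set B : Module.Basis ι ℚ (Fin n → ℚ) := Module.Basis.mk liQ hspan with hB
  have hrepr : ∀ (x : L) (i' : ι), B.repr (x : Fin n → ℚ) i' = ((b0.repr x i' : ℤ) : ℚ) := by
    intro x i'
    have hx : (x : Fin n → ℚ) = ∑ k, ((b0.repr x k : ℤ) : ℚ) • v k := by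
      conv_lhs => rw [← b0.sum_repr x]
      simp only [Int.cast_smul_eq_zsmul]
      simp only [hv, Submodule.coe_sum, Submodule.coe_smul_of_tower]
    rw [hx, map_sum]
    have hBk : ∀ k, B.repr (v k) = Finsupp.single k 1 := by
      intro k
      rw [← Module.Basis.mk_apply liQ hspan k, ← hB, B.repr_self]
    simp [hBk, Finsupp.single_apply]
  have hcard : Fintype.card ι = n := by
    have h1 : Module.finrank ℚ (Fin n → ℚ) = Fintype.card ι := Module.finrank_eq_card_basis B
    simpa using h1.symm
  set e : ι ≃ Fin n := Fintype.equivFinOfCardEq hcard with he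
  set B' : Module.Basis (Fin n) ℚ (Fin n → ℚ) := B.reindex e with hB'
  set Q : Matrix (Fin n) (Fin n) ℚ := (Pi.basisFun ℚ (Fin n)).toMatrix ⇑B' with hQ
  set Qi : Matrix (Fin n) (Fin n) ℚ := B'.toMatrix ⇑(Pi.basisFun ℚ (Fin n)) with hQi
  have hQiQ : Qi * Q = 1 := B'.toMatrix_mul_toMatrix_flip (Pi.basisFun ℚ (Fin n))
  have hQQi : Q * Qi = 1 := (Pi.basisFun ℚ (Fin n)).toMatrix_mul_toMatrix_flip B'
  set P : GL (Fin n) ℚ := ⟨Qi, Q, hQiQ, hQQi⟩ with hP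
  have key : ∀ A ∈ G, ∀ i j, ∃ k : ℤ,
      (Qi * ((A : GL (Fin n) ℚ) : Matrix (Fin n) (Fin n) ℚ) * Q) i j = k := by
    intro A hA i j
    have h1 : LinearMap.toMatrix (Pi.basisFun ℚ (Fin n)) (Pi.basisFun ℚ (Fin n))
        (Matrix.toLin' ((A : GL (Fin n) ℚ) : Matrix (Fin n) (Fin n) ℚ)) =
        ((A : GL (Fin n) ℚ) : Matrix (Fin n) (Fin n) ℚ) := by
      rw [← Matrix.toLin_eq_toLin', LinearMap.toMatrix_toLin]
    have hconj : Qi * ((A : GL (Fin n) ℚ) : Matrix (Fin n) (Fin n) ℚ) * Q =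
        LinearMap.toMatrix B' B'
          (Matrix.toLin' ((A : GL (Fin n) ℚ) : Matrix (Fin n) (Fin n) ℚ)) := by
      conv_lhs => rw [← h1]
      exact basis_toMatrix_mul_linearMap_toMatrix_mul_basis_toMatrix _ _ _ _ _
    rw [hconj, LinearMap.toMatrix_apply]
    have hBj : B' j = v (e.symm j) := by
      rw [hB', Module.Basis.reindex_apply, hB, Module.Basis.mk_apply]
    have hmemA : ((A : GL (Fin n) ℚ) : Matrix (Fin n) (Fin n) ℚ) *ᵥ v (e.symm j) ∈ L :=
      hinv A hA _ (hrange _)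
    refine ⟨b0.repr ⟨_, hmemA⟩ (e.symm i), ?_⟩
    rw [Matrix.toLin'_apply, hBj, hB', Module.Basis.repr_reindex_apply]
    exact hrepr ⟨_, hmemA⟩ (e.symm i)
  refine ⟨P, ?_⟩
  intro A hA
  have hPc : ∀ B : GL (Fin n) ℚ, ((P * B * P⁻¹ : GL (Fin n) ℚ) : Matrix (Fin n) (Fin n) ℚ)
      = Qi * (B : Matrix (Fin n) (Fin n) ℚ) * Q := by
    intro B
    have hPinv : ((P⁻¹ : GL (Fin n) ℚ) : Matrix (Fin n) (Fin n) ℚ) = Q := rfl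
    rw [Units.val_mul, Units.val_mul, hPinv]
  constructor
  · intro i j
    rw [hPc A]
    exact key A hA i j
  · intro i j
    have hstep : (P * A * P⁻¹)⁻¹ = P * A⁻¹ * P⁻¹ := by group
    rw [hstep, hPc A⁻¹]
    exact key A⁻¹ (inv_mem hA) i j
end
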